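/- Let R = k[x₁,…,x_d] (or its localization at the origin) and let K• be the Koszul complex on x₁,…,x_d. Then for every a ≥ 1 and i ≥ 1 the three-term complex 𝔪^{a-1}·K_{i+1} → 𝔪^a·K_i → 𝔪^{a+1}·K_{i-1} obtained by restricting the Koszul differentials is exact at the middle term, where 𝔪 = (x₁,…,x_d). -/

import Mathlib

open MvPolynomial

/-- The Koszul differential `K_{i+1} → K_i` of the Koszul complex on `z₁,…,z_r`,
where `K_i` is free on the `i`-element subsets of `{1,…,r}`. -/
def koszulDiff {O : Type*} [CommRing O] {r : ℕ} (z : Fin r → O) (i : ℕ)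
    (v : {s : Finset (Fin r) // s.card = i + 1} → O) :
    {s : Finset (Fin r) // s.card = i} → O :=
  fun t => ∑ j : Fin r, if h : j ∈ t.val then 0
    else (-1 : O) ^ ((t.val.filter (fun m => m < j)).card) * z j *
      v ⟨insert j t.val, by rw [Finset.card_insert_of_notMem h, t.2]⟩

namespace Stmt6Aux
open Pointwise
variable {d : ℕ}
def deg (σ : Fin d →₀ ℕ) : ℕ := ∑ i : Fin d, σ i

noncomputable def wt (c : ℕ) (p : MvPolynomial (Fin d) ℂ) : MvPolynomial (Fin d) ℂ :=
  ∑ σ ∈ p.support, monomial σ ((((deg σ) + c : ℕ) : ℂ)⁻¹ * coeff σ p)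

lemma coeff_wt (c : ℕ) (p : MvPolynomial (Fin d) ℂ) (τ : Fin d →₀ ℕ) :
    coeff τ (wt c p) = (((deg τ) + c : ℕ) : ℂ)⁻¹ * coeff τ p := by
  rw [wt, coeff_sum]
  simp only [coeff_monomial]
  rw [Finset.sum_eq_single τ]
  · simp
  · intro b _ hb; simp [hb]
  · intro h; simp only [MvPolynomial.mem_support_iff, not_not] at h; simp [h]

lemma wt_sum {ι : Type*} (c : ℕ) (s : Finset ι) (f : ι → MvPolynomial (Fin d) ℂ) :
    wt c (∑ i ∈ s, f i) = ∑ i ∈ s, wt c (f i) := by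
  ext τ; rw [coeff_wt, coeff_sum, coeff_sum, Finset.mul_sum]
  exact Finset.sum_congr rfl fun i _ => (coeff_wt c (f i) τ).symm

lemma wt_C_mul (c : ℕ) (α : ℂ) (p : MvPolynomial (Fin d) ℂ) :
    wt c (C α * p) = C α * wt c p := by
  ext τ; rw [coeff_wt, coeff_C_mul, coeff_C_mul, coeff_wt]; ring

lemma support_wt (c : ℕ) (p : MvPolynomial (Fin d) ℂ) : (wt c p).support ⊆ p.support := by
  intro τ hτ
  rw [MvPolynomial.mem_support_iff, coeff_wt] at hτ
  rw [MvPolynomial.mem_support_iff]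
  intro h; rw [h, mul_zero] at hτ; exact hτ rfl

lemma deg_sub_single {τ : Fin d →₀ ℕ} {j : Fin d} (h : τ j ≠ 0) :
    deg (τ - Finsupp.single j 1) + 1 = deg τ := by
  unfold deg
  rw [← Finset.sum_erase_add _ _ (Finset.mem_univ j), ← Finset.sum_erase_add _ τ (Finset.mem_univ j)]
  have h2 : ∀ i ∈ Finset.univ.erase j, ((τ - Finsupp.single j 1 : Fin d →₀ ℕ)) i = τ i := by
    intro i hi
    rw [Finsupp.tsub_apply, Finsupp.single_apply, if_neg (Finset.ne_of_mem_erase hi).symm,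
      Nat.sub_zero]
  rw [Finset.sum_congr rfl h2, Finsupp.tsub_apply, Finsupp.single_apply, if_pos rfl]
  have hs : (Finset.univ.erase j).sum ⇑τ = ∑ x ∈ Finset.univ.erase j, τ x := rfl
  rw [hs]
  omega

lemma wt_X_mul (c : ℕ) (j : Fin d) (p : MvPolynomial (Fin d) ℂ) :
    wt c (X j * p) = X j * wt (c + 1) p := by
  classical
  ext τ
  rw [coeff_wt, coeff_X_mul', coeff_X_mul']
  by_cases h : j ∈ τ.support
  · rw [if_pos h, if_pos h, coeff_wt]
    rw [Finsupp.mem_support_iff] at h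
    rw [← deg_sub_single h]
    ring_nf
  · rw [if_neg h, if_neg h, mul_zero]

lemma coeff_pderiv (j : Fin d) (p : MvPolynomial (Fin d) ℂ) (σ : Fin d →₀ ℕ) :
    coeff σ (pderiv j p) = ((σ j + 1 : ℕ) : ℂ) * coeff (σ + Finsupp.single j 1) p := by
  classical
  conv_lhs => rw [p.as_sum]
  rw [map_sum, coeff_sum]
  conv_rhs => rw [p.as_sum]
  rw [coeff_sum, Finset.mul_sum]
  refine Finset.sum_congr rfl fun μ _ => ?_
  rw [pderiv_monomial, coeff_monomial, coeff_monomial]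
  by_cases h : μ = σ + Finsupp.single j 1
  · subst h
    rw [if_pos rfl, if_pos (add_tsub_cancel_right σ (Finsupp.single j 1))]
    have : (σ + Finsupp.single j 1 : Fin d →₀ ℕ) j = σ j + 1 := by
      rw [Finsupp.add_apply, Finsupp.single_apply, if_pos rfl]
    rw [this]
    push_cast; ring
  · rw [if_neg h]
    by_cases h2 : μ - Finsupp.single j 1 = σ
    · rw [if_pos h2, mul_zero]
      by_cases h3 : μ j = 0
      · simp [h3]
      · exfalso
        apply h
        rw [← h2, tsub_add_cancel_of_le]
        rw [Finsupp.single_le_iff]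
        omega
    · rw [if_neg h2, mul_zero]

lemma coeff_X_pderiv (j : Fin d) (p : MvPolynomial (Fin d) ℂ) (τ : Fin d →₀ ℕ) :
    coeff τ (X j * pderiv j p) = ((τ j : ℕ) : ℂ) * coeff τ p := by
  classical
  rw [coeff_X_mul']
  by_cases h : j ∈ τ.support
  · rw [if_pos h, coeff_pderiv]
    rw [Finsupp.mem_support_iff] at h
    have h1 : ((τ - Finsupp.single j 1 : Fin d →₀ ℕ)) j + 1 = τ j := by
      rw [Finsupp.tsub_apply, Finsupp.single_apply, if_pos rfl]; omega
    have h2 : (τ - Finsupp.single j 1) + Finsupp.single j 1 = τ := by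
      rw [tsub_add_cancel_of_le]
      rw [Finsupp.single_le_iff]; omega
    rw [h1, h2]
  · rw [if_neg h]
    rw [Finsupp.notMem_support_iff] at h
    rw [h]
    simp

lemma wt_euler {c : ℕ} (hc : 1 ≤ c) (p : MvPolynomial (Fin d) ℂ) :
    wt c ((∑ j : Fin d, X j * pderiv j p) + c • p) = p := by
  ext τ
  rw [coeff_wt, coeff_add, coeff_sum]
  simp only [coeff_X_pderiv, coeff_smul]
  rw [← Finset.sum_mul]
  have hdeg : ∑ j : Fin d, ((τ j : ℕ) : ℂ) = ((deg τ : ℕ) : ℂ) := by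
    rw [deg]; push_cast; rfl
  rw [hdeg]
  have hne : ((deg τ + c : ℕ) : ℂ) ≠ 0 := by
    rw [Nat.cast_ne_zero]; omega
  rw [nsmul_eq_mul]
  push_cast at hne ⊢
  field_simp

lemma deg_add (σ τ : Fin d →₀ ℕ) : deg (σ + τ) = deg σ + deg τ := by
  unfold deg
  rw [← Finset.sum_add_distrib]
  exact Finset.sum_congr rfl fun i _ => rfl

lemma mem_span_X_deg {q : MvPolynomial (Fin d) ℂ}
    (hq : q ∈ Ideal.span (Set.range (X : Fin d → MvPolynomial (Fin d) ℂ)))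
    {σ : Fin d →₀ ℕ} (hσ : σ ∈ q.support) : 1 ≤ deg σ := by
  classical
  induction hq using Submodule.span_induction generalizing σ with
  | mem x hx =>
    obtain ⟨i, rfl⟩ := hx
    rw [MvPolynomial.support_X, Finset.mem_singleton] at hσ
    subst hσ
    simp [deg, Finsupp.single_apply]
  | zero => simp at hσ
  | add x y _ _ hx hy =>
    have := MvPolynomial.support_add hσ
    rw [Finset.mem_union] at this
    rcases this with h | h
    · exact hx h
    · exact hy h
  | smul r x _ hx =>
    have h1 : (r • x).support ⊆ r.support + x.support := by
      rw [smul_eq_mul]; exact MvPolynomial.support_mul r x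
    obtain ⟨σ₁, _, σ₂, hσ₂, rfl⟩ := Finset.mem_add.mp (h1 hσ)
    have := hx hσ₂
    rw [deg_add]; omega

lemma mem_pow_iff (a : ℕ) (p : MvPolynomial (Fin d) ℂ) :
    p ∈ (Ideal.span (Set.range (X : Fin d → MvPolynomial (Fin d) ℂ))) ^ a ↔
      ∀ σ ∈ p.support, a ≤ deg σ := by
  classical
  constructor
  · intro hp
    induction a generalizing p with
    | zero => intro σ _; omega
    | succ n ih =>
      rw [pow_succ] at hp
      induction hp using Submodule.mul_induction_on' with
      | mem_mul_mem x hx y hy =>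
        intro σ hσ
        obtain ⟨σ₁, hσ₁, σ₂, hσ₂, rfl⟩ := Finset.mem_add.mp (MvPolynomial.support_mul x y hσ)
        have h1 := ih x hx σ₁ hσ₁
        have h2 := mem_span_X_deg hy hσ₂
        rw [deg_add]; omega
      | add x hx y hy ihx ihy =>
        intro σ hσ
        have := MvPolynomial.support_add hσ
        rw [Finset.mem_union] at this
        rcases this with h | h
        · exact ihx σ h
        · exact ihy σ h
  · intro hp
    rw [p.as_sum]
    refine Ideal.sum_mem _ fun σ hσ => ?_
    rw [MvPolynomial.monomial_eq]
    refine Ideal.mul_mem_left _ _ ?_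
    have key : (σ.prod fun n e => (X n : MvPolynomial (Fin d) ℂ) ^ e) ∈
        (Ideal.span (Set.range (X : Fin d → MvPolynomial (Fin d) ℂ))) ^ (deg σ) := by
      have hd : deg σ = ∑ i ∈ σ.support, σ i := by
        unfold deg
        rw [Finset.sum_subset (Finset.subset_univ σ.support)]
        intro i _ hi
        rwa [Finsupp.notMem_support_iff] at hi
      rw [Finsupp.prod, hd, ← Finset.prod_pow_eq_pow_sum]
      refine Ideal.prod_mem_prod fun i _ => ?_
      exact Ideal.pow_mem_pow (Ideal.subset_span (Set.mem_range_self i)) _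
    exact Ideal.pow_le_pow_right (hp σ hσ) key

/-- sign -/
def εc (j : Fin d) (t : Finset (Fin d)) : ℂ := (-1) ^ ((t.filter (fun m => m < j)).card)

lemma filter_insert_self (j : Fin d) (u : Finset (Fin d)) :
    (insert j u).filter (fun m => m < j) = u.filter (fun m => m < j) := by
  rw [Finset.filter_insert, if_neg (lt_irrefl j)]

lemma filter_erase_self (j : Fin d) (u : Finset (Fin d)) :
    (u.erase j).filter (fun m => m < j) = u.filter (fun m => m < j) := by
  rw [Finset.filter_erase, Finset.erase_eq_of_notMem]
  simp

lemma εc_insert_self (j : Fin d) (u : Finset (Fin d)) : εc j (insert j u) = εc j u := by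
  rw [εc, εc, filter_insert_self]

lemma εc_erase_self (j : Fin d) (u : Finset (Fin d)) : εc j (u.erase j) = εc j u := by
  rw [εc, εc, filter_erase_self]

lemma εc_sq (j : Fin d) (u : Finset (Fin d)) : εc j u * εc j u = 1 := by
  rw [εc, ← pow_add]
  exact Even.neg_one_pow ⟨_, rfl⟩

lemma eps_cancel {e : ℂ} (he : e * e = 1) (p q : MvPolynomial (Fin d) ℂ) :
    C e * p * (C e * q) = p * q := by
  have : C e * p * (C e * q) = C (e * e) * (p * q) := by rw [map_mul]; ring
  rw [this, he, map_one, one_mul]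

lemma eps_cancel' {e : ℂ} (he : e * e = 1) (q : MvPolynomial (Fin d) ℂ) :
    C e * (C e * q) = q := by
  have : C e * (C e * q) = C (e * e) * q := by rw [map_mul]; ring
  rw [this, he, map_one, one_mul]

lemma sign_lemma {j l : Fin d} {u : Finset (Fin d)} (hj : j ∉ u) (hl : l ∈ u) (hne : j ≠ l) :
    εc j u * εc l (insert j u) = -(εc l u * εc j (u.erase l)) := by
  have hfl : (insert j u).filter (fun m => m < l) =
      if j < l then insert j (u.filter (fun m => m < l)) else u.filter (fun m => m < l) := by
    rw [Finset.filter_insert]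
  have hfe : (u.erase l).filter (fun m => m < j) = (u.filter (fun m => m < j)).erase l := by
    rw [Finset.filter_erase]
  rcases lt_or_gt_of_ne hne with h | h
  · -- j < l
    rw [εc, εc, εc, εc, hfl, if_pos h, hfe,
      Finset.card_insert_of_notMem (fun hmem => hj (Finset.mem_filter.mp hmem).1),
      Finset.erase_eq_of_notMem (fun hmem => absurd (Finset.mem_filter.mp hmem).2 (by
        simp only [not_lt]; exact le_of_lt h))]
    rw [pow_succ]
    ring
  · -- l < j
    have hlf : l ∈ u.filter (fun m => m < j) := Finset.mem_filter.mpr ⟨hl, h⟩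
    rw [εc, εc, εc, εc, hfl, if_neg (asymm h), hfe, Finset.card_erase_of_mem hlf]
    obtain ⟨k, hk⟩ : ∃ k, (u.filter (fun m => m < j)).card = k + 1 :=
      ⟨_, (Nat.succ_pred_eq_of_pos (Finset.card_pos.mpr ⟨l, hlf⟩)).symm⟩
    rw [hk]
    simp only [Nat.add_sub_cancel, pow_succ]
    ring

noncomputable def DD (vv : Finset (Fin d) → MvPolynomial (Fin d) ℂ) (s : Finset (Fin d)) :
    MvPolynomial (Fin d) ℂ :=
  ∑ l : Fin d, if l ∈ s then C (εc l s) * pderiv l (vv (s.erase l)) else 0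

noncomputable def δδ (vv : Finset (Fin d) → MvPolynomial (Fin d) ℂ) (s : Finset (Fin d)) :
    MvPolynomial (Fin d) ℂ :=
  ∑ j : Fin d, if j ∈ s then 0 else C (εc j s) * X j * vv (insert j s)

lemma key (m : ℕ) (vv : Finset (Fin d) → MvPolynomial (Fin d) ℂ)
    (hcyc : ∀ s : Finset (Fin d), s.card = m → δδ vv s = 0)
    (u : Finset (Fin d)) (hu : u.card = m + 1) :
    δδ (DD vv) u = (∑ j : Fin d, X j * pderiv j (vv u)) + u.card • vv u := by
  classical
  have hz : ∑ l : Fin d, (if l ∈ u then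
      C (εc l u) * pderiv l (δδ vv (u.erase l)) else 0) = 0 := by
    refine Finset.sum_eq_zero fun l _ => ?_
    by_cases hl : l ∈ u
    · rw [if_pos hl, hcyc (u.erase l) (by rw [Finset.card_erase_of_mem hl, hu]; rfl),
        map_zero, mul_zero]
    · rw [if_neg hl]
  have expandA : δδ (DD vv) u = ∑ j : Fin d, ∑ l : Fin d,
      (if j ∈ u then 0 else if l ∈ insert j u then
        C (εc j u) * X j * (C (εc l (insert j u)) * pderiv l (vv ((insert j u).erase l)))
      else 0) := by
    rw [δδ]
    refine Finset.sum_congr rfl fun j _ => ?_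
    by_cases hj : j ∈ u
    · rw [if_pos hj]
      simp [hj]
    · rw [if_neg hj, DD, Finset.mul_sum]
      refine Finset.sum_congr rfl fun l _ => ?_
      rw [if_neg hj]
      by_cases hl : l ∈ insert j u
      · rw [if_pos hl, if_pos hl]
      · rw [if_neg hl, if_neg hl, mul_zero]
  have expandB : ∑ l : Fin d, (if l ∈ u then
      C (εc l u) * pderiv l (δδ vv (u.erase l)) else 0) =
      ∑ j : Fin d, ∑ l : Fin d,
      (if l ∈ u then (if j ∈ u.erase l then 0 else
        C (εc l u) * pderiv l (C (εc j (u.erase l)) * X j * vv (insert j (u.erase l))))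
      else 0) := by
    rw [Finset.sum_comm]
    refine Finset.sum_congr rfl fun l _ => ?_
    by_cases hl : l ∈ u
    · rw [if_pos hl, δδ, map_sum, Finset.mul_sum]
      refine Finset.sum_congr rfl fun j _ => ?_
      rw [if_pos hl]
      by_cases hj : j ∈ u.erase l
      · rw [if_pos hj, if_pos hj, map_zero, mul_zero]
      · rw [if_neg hj, if_neg hj]
    · rw [if_neg hl]
      simp [hl]
  have main : δδ (DD vv) u + ∑ l : Fin d, (if l ∈ u then
      C (εc l u) * pderiv l (δδ vv (u.erase l)) else 0) =
      (∑ j : Fin d, X j * pderiv j (vv u)) + u.card • vv u := by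
    rw [expandA, expandB, ← Finset.sum_add_distrib]
    have ptwise : ∀ j : Fin d,
        (∑ l : Fin d, (if j ∈ u then 0 else if l ∈ insert j u then
          C (εc j u) * X j * (C (εc l (insert j u)) * pderiv l (vv ((insert j u).erase l)))
        else 0)) +
        (∑ l : Fin d, (if l ∈ u then (if j ∈ u.erase l then 0 else
          C (εc l u) * pderiv l (C (εc j (u.erase l)) * X j * vv (insert j (u.erase l))))
        else 0)) =
        X j * pderiv j (vv u) + (if j ∈ u then vv u else 0) := by
      intro j
      rw [← Finset.sum_add_distrib]
      have : ∀ l : Fin d,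
          ((if j ∈ u then 0 else if l ∈ insert j u then
            C (εc j u) * X j * (C (εc l (insert j u)) * pderiv l (vv ((insert j u).erase l)))
          else 0) +
          (if l ∈ u then (if j ∈ u.erase l then 0 else
            C (εc l u) * pderiv l (C (εc j (u.erase l)) * X j * vv (insert j (u.erase l))))
          else 0)) =
          (if l = j then X j * pderiv j (vv u) + (if j ∈ u then vv u else 0) else 0) := by
        intro l
        by_cases hlj : l = j
        · subst hlj
          rw [if_pos rfl]
          by_cases hj : l ∈ u
          · -- diagonal, j = l ∈ u
            rw [if_pos hj, if_pos hj, if_neg (Finset.notMem_erase l u),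
              Finset.insert_erase hj, εc_erase_self, zero_add]
            have hp : pderiv l (C (εc l u) * X l * vv u) =
                C (εc l u) * (vv u + X l * pderiv l (vv u)) := by
              rw [mul_assoc, pderiv_C_mul, pderiv_mul, pderiv_X_self]
              ring
            rw [hp, eps_cancel' (εc_sq l u), if_pos hj]
            ring
          · -- diagonal, j = l ∉ u
            rw [if_neg hj, if_neg hj, if_pos (Finset.mem_insert_self l u),
              Finset.erase_insert hj, εc_insert_self, add_zero, if_neg hj, add_zero,
              eps_cancel (εc_sq l u)]
        · rw [if_neg hlj]
          by_cases hj : j ∈ u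
          · rw [if_pos hj, zero_add]
            by_cases hl : l ∈ u
            · rw [if_pos hl, if_pos (Finset.mem_erase.mpr ⟨fun h => hlj h.symm, hj⟩)]
            · rw [if_neg hl]
          · rw [if_neg hj]
            by_cases hl : l ∈ u
            · -- cross case
              rw [if_pos (Finset.mem_insert_of_mem hl), if_pos hl,
                if_neg (fun h => hj (Finset.mem_of_mem_erase h))]
              have hset : (insert j u).erase l = insert j (u.erase l) :=
                Finset.erase_insert_of_ne (fun h => hlj h.symm)
              have hp : pderiv l (C (εc j (u.erase l)) * X j * vv (insert j (u.erase l))) =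
                  C (εc j (u.erase l)) * (X j * pderiv l (vv (insert j (u.erase l)))) := by
                rw [mul_assoc, pderiv_C_mul, pderiv_mul,
                  pderiv_X_of_ne (fun h => hlj h.symm), zero_mul, zero_add]
              rw [hset, hp]
              have hsgn := sign_lemma hj hl (fun h => hlj h.symm)
              calc C (εc j u) * X j * (C (εc l (insert j u)) *
                      pderiv l (vv (insert j (u.erase l)))) +
                    C (εc l u) * (C (εc j (u.erase l)) * (X j * pderiv l (vv (insert j (u.erase l)))))
                  = C (εc j u * εc l (insert j u) + εc l u * εc j (u.erase l)) *
                      (X j * pderiv l (vv (insert j (u.erase l)))) := by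
                    rw [map_add, map_mul, map_mul]; ring
                _ = 0 := by rw [hsgn, neg_add_cancel, map_zero, zero_mul]
            · rw [if_neg hl, add_zero,
                if_neg (fun h => (Finset.mem_insert.mp h).elim hlj hl)]
      rw [Finset.sum_congr rfl fun l _ => this l, Finset.sum_ite_eq' Finset.univ j _,
        if_pos (Finset.mem_univ j)]
    rw [Finset.sum_congr rfl fun j _ => ptwise j, Finset.sum_add_distrib]
    congr 1
    rw [Finset.sum_ite_mem, Finset.univ_inter, Finset.sum_const]
  rw [← main, hz, add_zero]


lemma wt_zero (c : ℕ) : wt c (0 : MvPolynomial (Fin d) ℂ) = 0 := by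
  ext τ; rw [coeff_wt]; simp

lemma deg_single (l : Fin d) : deg (Finsupp.single l 1) = 1 := by
  unfold deg
  simp [Finsupp.single_apply]

lemma pderiv_mem {a : ℕ} {q : MvPolynomial (Fin d) ℂ}
    (hq : q ∈ (Ideal.span (Set.range (X : Fin d → MvPolynomial (Fin d) ℂ))) ^ a) (l : Fin d) :
    pderiv l q ∈ (Ideal.span (Set.range (X : Fin d → MvPolynomial (Fin d) ℂ))) ^ (a - 1) := by
  rw [mem_pow_iff] at hq ⊢
  intro σ hσ
  rw [MvPolynomial.mem_support_iff, coeff_pderiv] at hσ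
  have h2 : coeff (σ + Finsupp.single l 1) q ≠ 0 := right_ne_zero_of_mul hσ
  have h3 := hq _ (MvPolynomial.mem_support_iff.mpr h2)
  rw [deg_add, deg_single] at h3
  omega

lemma C_εc (j : Fin d) (s : Finset (Fin d)) :
    (C (εc j s) : MvPolynomial (Fin d) ℂ) =
      (-1 : MvPolynomial (Fin d) ℂ) ^ ((s.filter (fun m => m < j)).card) := by
  rw [εc, map_pow, map_neg, map_one]

lemma koszul_eq_δδ (k : ℕ) (vfun : {s : Finset (Fin d) // s.card = k + 1} → MvPolynomial (Fin d) ℂ)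
    (vv : Finset (Fin d) → MvPolynomial (Fin d) ℂ)
    (hvv : ∀ (s : Finset (Fin d)) (h : s.card = k + 1), vv s = vfun ⟨s, h⟩)
    (t : {s : Finset (Fin d) // s.card = k}) :
    koszulDiff X k vfun t = δδ vv t.val := by
  rw [koszulDiff, δδ]
  refine Finset.sum_congr rfl fun j _ => ?_
  by_cases hj : j ∈ t.val
  · rw [dif_pos hj, if_pos hj]
  · rw [dif_neg hj, if_neg hj,
      hvv (insert j t.val) (by rw [Finset.card_insert_of_notMem hj, t.2]), C_εc]

lemma δδ_wt (c : ℕ) (g : Finset (Fin d) → MvPolynomial (Fin d) ℂ) (u : Finset (Fin d)) :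
    δδ (fun s => wt (c + 1) (g s)) u = wt c (δδ g u) := by
  rw [δδ, δδ, wt_sum]
  refine Finset.sum_congr rfl fun j _ => ?_
  by_cases hj : j ∈ u
  · rw [if_pos hj, if_pos hj, wt_zero]
  · rw [if_neg hj, if_neg hj]
    conv_rhs => rw [mul_assoc, wt_C_mul, wt_X_mul]
    rw [mul_assoc]

end Stmt6Aux

/-- In the Koszul complex on the variables of `ℂ[x₁,…,x_d]`, for `a ≥ 1` and `i = m+1 ≥ 1`,
the three-term complex `𝔪^{a-1}·K_{i+1} → 𝔪^a·K_i → 𝔪^{a+1}·K_{i-1}` is exact in the middle: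
every Koszul `i`-cycle with coefficients in `𝔪^a` is the boundary of a chain with
coefficients in `𝔪^{a-1}`. -/
theorem stmt6 (d m a : ℕ) (ha : 1 ≤ a)
    (v : {s : Finset (Fin d) // s.card = m + 1} → MvPolynomial (Fin d) ℂ)
    (hv : ∀ s, v s ∈ (Ideal.span (Set.range (X : Fin d → MvPolynomial (Fin d) ℂ))) ^ a)
    (hcycle : koszulDiff X m v = 0) :
    ∃ w : {s : Finset (Fin d) // s.card = m + 2} → MvPolynomial (Fin d) ℂ,
      (∀ s, w s ∈ (Ideal.span (Set.range (X : Fin d → MvPolynomial (Fin d) ℂ))) ^ (a - 1)) ∧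
      koszulDiff X (m + 1) w = v := by
  classical
  open Stmt6Aux in
  let vv : Finset (Fin d) → MvPolynomial (Fin d) ℂ :=
    fun s => if h : s.card = m + 1 then v ⟨s, h⟩ else 0
  have hvv_eq : ∀ (s : Finset (Fin d)) (h : s.card = m + 1), vv s = v ⟨s, h⟩ :=
    fun s h => dif_pos h
  have hvv_mem : ∀ s, vv s ∈
      (Ideal.span (Set.range (X : Fin d → MvPolynomial (Fin d) ℂ))) ^ a := by
    intro s
    by_cases h : s.card = m + 1
    · rw [hvv_eq s h]; exact hv _
    · show dite _ _ _ ∈ _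
      rw [dif_neg h]; exact Submodule.zero_mem _
  have hcyc : ∀ s : Finset (Fin d), s.card = m → Stmt6Aux.δδ vv s = 0 := by
    intro s hs
    rw [← Stmt6Aux.koszul_eq_δδ m v vv hvv_eq ⟨s, hs⟩, hcycle]
    rfl
  refine ⟨fun s => Stmt6Aux.wt (m + 2) (Stmt6Aux.DD vv s.val), ?_, ?_⟩
  · intro s
    have hDD : Stmt6Aux.DD vv s.val ∈
        (Ideal.span (Set.range (X : Fin d → MvPolynomial (Fin d) ℂ))) ^ (a - 1) := by
      rw [Stmt6Aux.DD]
      refine Ideal.sum_mem _ fun l _ => ?_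
      by_cases hl : l ∈ s.val
      · rw [if_pos hl]
        exact Ideal.mul_mem_left _ _ (Stmt6Aux.pderiv_mem (hvv_mem _) l)
      · rw [if_neg hl]; exact Submodule.zero_mem _
    rw [Stmt6Aux.mem_pow_iff] at hDD ⊢
    exact fun σ hσ => hDD σ (Stmt6Aux.support_wt _ _ hσ)
  · funext t
    rw [Stmt6Aux.koszul_eq_δδ (m + 1) _ (fun s => Stmt6Aux.wt (m + 2) (Stmt6Aux.DD vv s))
      (fun s h => rfl) t]
    have : (fun s => Stmt6Aux.wt (m + 2) (Stmt6Aux.DD vv s)) =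
        fun s => Stmt6Aux.wt ((m + 1) + 1) (Stmt6Aux.DD vv s) := rfl
    rw [this, Stmt6Aux.δδ_wt (m + 1) (Stmt6Aux.DD vv) t.val,
      Stmt6Aux.key m vv hcyc t.val t.2, t.2, Stmt6Aux.wt_euler (by omega), hvv_eq t.val t.2]
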